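/- arXiv:1310.1658 — 6 statements merged into one kernel-verified Lean document; each statement's English description precedes it below -/
import Mathlib

section
/- For n ≥ 0 and real 0 < q < 1, the q-Euler polynomial satisfies E_{n,q}(x) = Σ_{l=0}^{n} C(n,l) q^{x l} E_{l,q}(0) [x]_q^{n-l}, where C(n,l) is the binomial coefficient. -/
open Finset

/-- q-analogue [z]_q = (1 - q^z)/(1 - q) (real rpow). -/
noncomputable def qn (q z : ℝ) : ℝ := (1 - q ^ z) / (1 - q)

/-- q-Euler polynomial E_{n,q}(x) = [2]_q Σ_{m} (-1)^m q^m [m+x]_q^n. -/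
noncomputable def qE (n : ℕ) (q x : ℝ) : ℝ :=
  (1 + q) * ∑' m : ℕ, (-1 : ℝ) ^ m * q ^ m * (qn q ((m : ℝ) + x)) ^ n

/-- Alternating q-power sum S*_{n,i,q}(a). -/
noncomputable def qS (n i a : ℕ) (q : ℝ) : ℝ :=
  ∑ j ∈ Finset.range a, (-1 : ℝ) ^ j * q ^ ((n + 1 - i) * j) * (qn q (j : ℝ)) ^ i

lemma qn_nonneg {q : ℝ} (hq0 : 0 < q) (hq1 : q < 1) {z : ℝ} (hz : 0 ≤ z) : 0 ≤ qn q z := by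
  unfold qn
  have h1 : q ^ z ≤ 1 := Real.rpow_le_one hq0.le hq1.le hz
  have h2 : (0:ℝ) < 1 - q := by linarith
  exact div_nonneg (by linarith) h2.le

lemma summable_aux {q : ℝ} (hq0 : 0 < q) (hq1 : q < 1) (l : ℕ) :
    Summable (fun m : ℕ => (-1:ℝ)^m * q^m * (qn q (m:ℝ))^l) := by
  have h2 : (0:ℝ) < 1 - q := by linarith
  apply Summable.of_norm_bounded (g := fun m : ℕ => (1/(1-q))^l * q^m)
  · exact (summable_geometric_of_lt_one hq0.le hq1).mul_left _
  · intro m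
    have h1 : 0 ≤ qn q (m:ℝ) := qn_nonneg hq0 hq1 (Nat.cast_nonneg m)
    have h3 : qn q (m:ℝ) ≤ 1/(1-q) := by
      unfold qn
      gcongr
      have : (0:ℝ) < q ^ (m:ℝ) := Real.rpow_pos_of_pos hq0 _
      linarith
    simp only [norm_mul, norm_pow, norm_neg, norm_one, one_pow, one_mul, Real.norm_eq_abs,
      abs_of_pos hq0, abs_of_nonneg h1]
    rw [mul_comm]
    gcongr

theorem qEuler_expansion (q : ℝ) (hq0 : 0 < q) (hq1 : q < 1) (x : ℝ) (hx : 0 ≤ x) (n : ℕ) :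
    qE n q x = ∑ l ∈ Finset.range (n + 1),
      (n.choose l : ℝ) * q ^ (x * (l : ℝ)) * qE l q 0 * (qn q x) ^ (n - l) := by
  have h2 : (0:ℝ) < 1 - q := by linarith
  have key : ∀ m : ℕ, ((-1:ℝ)^m * q^m) * (qn q ((m:ℝ) + x))^n
      = ∑ l ∈ range (n+1),
          ((-1:ℝ)^m * q^m * (qn q (m:ℝ))^l) * ((q^x)^l * (qn q x)^(n-l) * (n.choose l : ℝ)) := by
    intro m
    have h1 : qn q ((m:ℝ) + x) = q^x * qn q (m:ℝ) + qn q x := by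
      unfold qn
      rw [Real.rpow_add hq0]
      field_simp
      ring
    rw [h1, add_pow, Finset.mul_sum]
    refine Finset.sum_congr rfl fun l _ => ?_
    ring
  have hsum : ∀ l : ℕ, Summable (fun m : ℕ =>
      ((-1:ℝ)^m * q^m * (qn q (m:ℝ))^l) * ((q^x)^l * (qn q x)^(n-l) * (n.choose l : ℝ))) :=
    fun l => (summable_aux hq0 hq1 l).mul_right _
  unfold qE
  rw [tsum_congr key, Summable.tsum_finsetSum (fun l _ => hsum l), Finset.mul_sum]
  refine Finset.sum_congr rfl fun l hl => ?_
  rw [tsum_mul_right]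
  simp only [add_zero]
  have hp : q ^ (x * (l:ℝ)) = (q^x)^l := by
    rw [Real.rpow_mul hq0.le, Real.rpow_natCast]
  rw [hp]
  ring
end

section
/- For n ≥ 0 and real 0 < q < 1 and x, y ≥ 0, the addition formula E_{n,q}(x+y) = Σ_{i=0}^{n} C(n,i) q^{x i} E_{i,q}(y) [x]_q^{n-i} holds. -/
open Finset

theorem qEuler_addition (q : ℝ) (hq0 : 0 < q) (hq1 : q < 1) (x y : ℝ) (hx : 0 ≤ x)
    (hy : 0 ≤ y) (n : ℕ) :
    qE n q (x + y) = ∑ i ∈ Finset.range (n + 1),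
      (n.choose i : ℝ) * q ^ (x * (i : ℝ)) * qE i q y * (qn q x) ^ (n - i) := by
  have h1q : 0 < 1 - q := by linarith
  have hqbound : ∀ z : ℝ, 0 ≤ z → |qn q z| ≤ 1 / (1 - q) := by
    intro z hz
    have h1 : q ^ z ≤ 1 := Real.rpow_le_one hq0.le hq1.le hz
    have h2 : (0:ℝ) < q ^ z := Real.rpow_pos_of_pos hq0 z
    unfold qn
    rw [abs_of_nonneg (div_nonneg (by linarith) h1q.le)]
    gcongr
    linarith
  have hsum : ∀ i : ℕ,
      Summable (fun m : ℕ => (-1:ℝ)^m * q^m * (qn q ((m:ℝ)+y))^i) := by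
    intro i
    apply Summable.of_abs
    apply Summable.of_nonneg_of_le (fun m => abs_nonneg _) _
      ((summable_geometric_of_lt_one hq0.le hq1).mul_right ((1/(1-q))^i))
    intro m
    rw [abs_mul, abs_mul, abs_pow, abs_neg, abs_one, one_pow, one_mul, abs_pow,
      abs_of_pos hq0, abs_pow]
    exact mul_le_mul_of_nonneg_left
      (pow_le_pow_left₀ (abs_nonneg _) (hqbound _ (by positivity)) i) (by positivity)
  have hkey : ∀ m : ℕ, qn q ((m:ℝ) + (x+y)) = qn q x + q ^ x * qn q ((m:ℝ) + y) := by
    intro m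
    unfold qn
    have h : q ^ ((m:ℝ) + (x+y)) = q ^ x * q ^ ((m:ℝ)+y) := by
      rw [← Real.rpow_add hq0]; ring_nf
    rw [h]
    field_simp
    ring
  have step1 : ∀ m : ℕ, (-1:ℝ)^m * q^m * (qn q ((m:ℝ)+(x+y)))^n
      = ∑ i ∈ range (n+1), ((n.choose i : ℝ) * q ^ (x*(i:ℝ)) * (qn q x)^(n-i)) *
          ((-1:ℝ)^m * q^m * (qn q ((m:ℝ)+y))^i) := by
    intro m
    rw [hkey m, add_comm (qn q x), add_pow, Finset.mul_sum]
    apply Finset.sum_congr rfl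
    intro i _
    have hq_pow : q ^ (x*(i:ℝ)) = (q ^ x) ^ i := by
      rw [Real.rpow_mul hq0.le, Real.rpow_natCast]
    rw [hq_pow, mul_pow]
    ring
  unfold qE
  rw [tsum_congr step1, Summable.tsum_finsetSum (fun i _ => (hsum i).mul_left _), Finset.mul_sum]
  apply Finset.sum_congr rfl
  intro i _
  rw [tsum_mul_left]
  ring
end

section
/- For n ≥ 0 and real 0 < q < 1 and x, y ≥ 0, one also has E_{n,q}(x+y) = Σ_{i=0}^{n} C(n,i) q^{(n-i) x} E_{n-i,q}(y) [x]_q^{i}. -/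
open Finset

theorem qEuler_addition' (q : ℝ) (hq0 : 0 < q) (hq1 : q < 1) (x y : ℝ) (hx : 0 ≤ x)
    (hy : 0 ≤ y) (n : ℕ) :
    qE n q (x + y) = ∑ i ∈ Finset.range (n + 1),
      (n.choose i : ℝ) * q ^ (x * ((n - i : ℕ) : ℝ)) * qE (n - i) q y * (qn q x) ^ i := by
  have hq1' : (0:ℝ) < 1 - q := by linarith
  -- summability of each term
  have hsum : ∀ k : ℕ, Summable (fun m : ℕ => (-1:ℝ)^m * q^m * qn q ((m:ℝ)+y) ^ k) := by
    intro k
    apply Summable.of_norm_bounded (g := fun m : ℕ => q^m * (1/(1-q))^k)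
      ((summable_geometric_of_lt_one hq0.le hq1).mul_right _)
    intro m
    have hz : (0:ℝ) ≤ (m:ℝ) + y := by positivity
    have h1 : q ^ ((m:ℝ)+y) ≤ 1 := Real.rpow_le_one hq0.le hq1.le hz
    have h2 : (0:ℝ) < q ^ ((m:ℝ)+y) := Real.rpow_pos_of_pos hq0 _
    have hb : |qn q ((m:ℝ)+y)| ≤ 1/(1-q) := by
      unfold qn
      rw [abs_div, abs_of_pos hq1', abs_of_nonneg (by linarith)]
      gcongr
      linarith
    calc ‖(-1:ℝ)^m * q^m * qn q ((m:ℝ)+y) ^ k‖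
        = q^m * |qn q ((m:ℝ)+y)| ^ k := by
          rw [Real.norm_eq_abs, abs_mul, abs_mul, abs_pow, abs_neg, abs_one, one_pow, one_mul,
            abs_pow, abs_pow, abs_of_pos hq0]
      _ ≤ q^m * (1/(1-q))^k := by gcongr
  -- key pointwise identity
  have key : ∀ m : ℕ, qn q ((m:ℝ) + (x+y)) = qn q x + q ^ x * qn q ((m:ℝ) + y) := by
    intro m
    unfold qn
    rw [show (m:ℝ) + (x+y) = x + ((m:ℝ)+y) by ring, Real.rpow_add hq0]
    field_simp
    ring
  have hterm : ∀ m : ℕ, (-1:ℝ)^m * q^m * qn q ((m:ℝ) + (x+y)) ^ n =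
      ∑ i ∈ Finset.range (n+1),
        ((n.choose i : ℝ) * qn q x ^ i * (q ^ x)^(n-i)) *
          ((-1:ℝ)^m * q^m * qn q ((m:ℝ)+y) ^ (n-i)) := by
    intro m
    rw [key m, add_pow, Finset.mul_sum]
    refine Finset.sum_congr rfl fun i _ => by ring
  unfold qE
  rw [tsum_congr hterm, Summable.tsum_finsetSum (fun i _ => ((hsum (n-i)).mul_left _)), Finset.mul_sum]
  refine Finset.sum_congr rfl fun i _ => ?_
  rw [tsum_mul_left]
  have hrp : q ^ (x * ((n - i : ℕ) : ℝ)) = (q ^ x) ^ (n - i) := by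
    rw [Real.rpow_mul hq0.le, Real.rpow_natCast]
  rw [hrp]
  ring
end

section
/- Let a be an odd positive integer, 0 < q < 1 real, x ≥ 0, n ≥ 0. Then Σ_{j=0}^{a-1} (-1)^j q^{b j} E_{n,q^a}(b x + b j / a) = Σ_{i=0}^{n} C(n,i) ([b]_q / [a]_q)^i E_{n-i,q^a}(b x) S*_{n,i,q^b}(a), where S*_{n,i,q}(a) = Σ_{j=0}^{a-1} (-1)^j q^{(n+1-i) j} [j]_q^i, for any positive integer b. -/
open Finset

lemma summable_qE_aux {Q : ℝ} (hQ0 : 0 < Q) (hQ1 : Q < 1) {y : ℝ} (hy : 0 ≤ y) (k : ℕ) :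
    Summable (fun m : ℕ => (-1 : ℝ) ^ m * Q ^ m * (qn Q ((m : ℝ) + y)) ^ k) := by
  have h1 : (0 : ℝ) < 1 - Q := by linarith
  apply Summable.of_norm_bounded (g := fun m : ℕ => (1 / (1 - Q)) ^ k * Q ^ m)
    ((summable_geometric_of_lt_one hQ0.le hQ1).mul_left _)
  intro m
  have hm : (0 : ℝ) ≤ (m : ℝ) + y := by positivity
  have hle : Q ^ ((m : ℝ) + y) ≤ 1 := Real.rpow_le_one hQ0.le hQ1.le hm
  have hpos : 0 < Q ^ ((m : ℝ) + y) := Real.rpow_pos_of_pos hQ0 _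
  have hq : 0 ≤ qn Q ((m : ℝ) + y) := div_nonneg (by linarith) h1.le
  have hub : qn Q ((m : ℝ) + y) ≤ 1 / (1 - Q) := by
    rw [qn, div_le_div_iff₀ h1 h1]
    nlinarith
  have hnorm : ‖(-1 : ℝ) ^ m * Q ^ m * (qn Q ((m : ℝ) + y)) ^ k‖
      = Q ^ m * (qn Q ((m : ℝ) + y)) ^ k := by
    simp [Real.norm_eq_abs, abs_mul, abs_pow, abs_of_nonneg hQ0.le, abs_of_nonneg hq]
  rw [hnorm, mul_comm]
  exact mul_le_mul (pow_le_pow_left₀ hq hub k) le_rfl (pow_nonneg hQ0.le m)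
    (pow_nonneg (by positivity) k)

lemma qn_key (q : ℝ) (hq0 : 0 < q) (hq1 : q < 1) (a b : ℕ) (ha : 0 < a) (hb : 0 < b)
    (j m : ℕ) (x : ℝ) :
    qn (q ^ a) ((m : ℝ) + ((b : ℝ) * x + (b : ℝ) * (j : ℝ) / (a : ℝ))) =
      (qn q (b : ℝ) / qn q (a : ℝ)) * qn (q ^ b) (j : ℝ) +
        (q ^ b) ^ j * qn (q ^ a) ((m : ℝ) + (b : ℝ) * x) := by
  have h1 : (1 : ℝ) - q ≠ 0 := by nlinarith
  have haR : (a : ℝ) ≠ 0 := Nat.cast_ne_zero.mpr ha.ne'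
  have hrw : ∀ (c : ℕ) (z : ℝ), ((q : ℝ) ^ c) ^ z = q ^ ((c : ℝ) * z) := by
    intro c z
    rw [← Real.rpow_natCast q c, ← Real.rpow_mul hq0.le]
  have hA : (q : ℝ) ^ a < 1 := pow_lt_one₀ hq0.le hq1 ha.ne'
  have hB : (q : ℝ) ^ b < 1 := pow_lt_one₀ hq0.le hq1 hb.ne'
  have hA' : (1 : ℝ) - q ^ a ≠ 0 := by nlinarith [pow_pos hq0 a]
  have hB' : (1 : ℝ) - q ^ b ≠ 0 := by nlinarith [pow_pos hq0 b]
  have e1 : (a : ℝ) * ((m : ℝ) + ((b : ℝ) * x + (b : ℝ) * (j : ℝ) / (a : ℝ)))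
      = (a : ℝ) * ((m : ℝ) + (b : ℝ) * x) + (b : ℝ) * (j : ℝ) := by
    field_simp
    ring
  have e2 : q ^ ((a : ℝ) * ((m : ℝ) + (b : ℝ) * x) + (b : ℝ) * (j : ℝ))
      = q ^ ((a : ℝ) * ((m : ℝ) + (b : ℝ) * x)) * q ^ ((b : ℝ) * (j : ℝ)) :=
    Real.rpow_add hq0 _ _
  have e3 : ((q : ℝ) ^ b) ^ j = q ^ ((b : ℝ) * (j : ℝ)) := by
    rw [← hrw b (j : ℝ), Real.rpow_natCast]
  have e4 : qn q (a : ℝ) = (1 - q ^ a) / (1 - q) := by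
    rw [qn, Real.rpow_natCast]
  have e5 : qn q (b : ℝ) = (1 - q ^ b) / (1 - q) := by
    rw [qn, Real.rpow_natCast]
  simp only [qn]
  rw [hrw a, hrw a, hrw b, e1, e2, e3, Real.rpow_natCast q a, Real.rpow_natCast q b]
  set X := q ^ ((a : ℝ) * ((m : ℝ) + (b : ℝ) * x))
  set Y := q ^ ((b : ℝ) * (j : ℝ))
  field_simp
  ring

theorem qEuler_sum_expansion (q : ℝ) (hq0 : 0 < q) (hq1 : q < 1) (x : ℝ) (hx : 0 ≤ x)
    (n a b : ℕ) (ha : 0 < a) (hao : Odd a) (hb : 0 < b) :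
    ∑ j ∈ Finset.range a, (-1 : ℝ) ^ j * q ^ (b * j) *
        qE n (q ^ a) ((b : ℝ) * x + (b : ℝ) * (j : ℝ) / (a : ℝ)) =
      ∑ i ∈ Finset.range (n + 1), (n.choose i : ℝ) * (qn q (b : ℝ) / qn q (a : ℝ)) ^ i *
        qE (n - i) (q ^ a) ((b : ℝ) * x) * qS n i a (q ^ b) := by
  have hQ0 : (0 : ℝ) < q ^ a := pow_pos hq0 a
  have hQ1 : (q : ℝ) ^ a < 1 := pow_lt_one₀ hq0.le hq1 ha.ne'
  have hy : (0 : ℝ) ≤ (b : ℝ) * x := by positivity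
  set r : ℝ := qn q (b : ℝ) / qn q (a : ℝ) with hr
  -- per-j identity
  have hj : ∀ j : ℕ,
      (-1 : ℝ) ^ j * q ^ (b * j) *
          qE n (q ^ a) ((b : ℝ) * x + (b : ℝ) * (j : ℝ) / (a : ℝ)) =
        ∑ i ∈ Finset.range (n + 1), (n.choose i : ℝ) * r ^ i * qE (n - i) (q ^ a) ((b : ℝ) * x) *
          ((-1 : ℝ) ^ j * (q ^ b) ^ ((n + 1 - i) * j) * (qn (q ^ b) (j : ℝ)) ^ i) := by
    intro j
    have hbase : ∀ m : ℕ,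
        qn (q ^ a) ((m : ℝ) + ((b : ℝ) * x + (b : ℝ) * (j : ℝ) / (a : ℝ)))
          = r * qn (q ^ b) (j : ℝ) + (q ^ b) ^ j * qn (q ^ a) ((m : ℝ) + (b : ℝ) * x) :=
      fun m => qn_key q hq0 hq1 a b ha hb j m x
    have hterm : ∀ m : ℕ,
        (-1 : ℝ) ^ m * (q ^ a) ^ m *
            (qn (q ^ a) ((m : ℝ) + ((b : ℝ) * x + (b : ℝ) * (j : ℝ) / (a : ℝ)))) ^ n
          = ∑ i ∈ Finset.range (n + 1),
              ((n.choose i : ℝ) * (r * qn (q ^ b) (j : ℝ)) ^ i * ((q ^ b) ^ j) ^ (n - i)) *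
                ((-1 : ℝ) ^ m * (q ^ a) ^ m * (qn (q ^ a) ((m : ℝ) + (b : ℝ) * x)) ^ (n - i)) := by
      intro m
      rw [hbase m, add_pow, Finset.mul_sum]
      refine Finset.sum_congr rfl fun i _ => ?_
      rw [mul_pow]
      ring
    have hsum :
        (∑' m : ℕ, (-1 : ℝ) ^ m * (q ^ a) ^ m *
            (qn (q ^ a) ((m : ℝ) + ((b : ℝ) * x + (b : ℝ) * (j : ℝ) / (a : ℝ)))) ^ n)
          = ∑ i ∈ Finset.range (n + 1),
              ((n.choose i : ℝ) * (r * qn (q ^ b) (j : ℝ)) ^ i * ((q ^ b) ^ j) ^ (n - i)) *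
                ∑' m : ℕ, (-1 : ℝ) ^ m * (q ^ a) ^ m *
                  (qn (q ^ a) ((m : ℝ) + (b : ℝ) * x)) ^ (n - i) := by
      rw [tsum_congr hterm, Summable.tsum_finsetSum]
      · exact Finset.sum_congr rfl fun i _ => tsum_mul_left
      · intro i _
        exact (summable_qE_aux hQ0 hQ1 hy (n - i)).mul_left _
    rw [qE, hsum, Finset.mul_sum, Finset.mul_sum]
    refine Finset.sum_congr rfl fun i hi => ?_
    have hile : i ≤ n := Nat.lt_succ_iff.mp (Finset.mem_range.mp hi)
    rw [qE]
    have hexp : q ^ (b * j) * ((q ^ b) ^ j) ^ (n - i) = (q ^ b) ^ ((n + 1 - i) * j) := by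
      rw [← pow_mul, ← pow_mul, ← pow_mul, ← pow_add]
      congr 1
      have : n + 1 - i = (n - i) + 1 := by omega
      rw [this]
      ring
    rw [mul_pow, ← hexp]
    ring
  rw [Finset.sum_congr rfl fun j _ => hj j, Finset.sum_comm]
  refine Finset.sum_congr rfl fun i _ => ?_
  rw [qS, ← Finset.mul_sum]
end

section
/- Let a, b be odd positive integers, 0 < q < 1 real, x ≥ 0, n ≥ 0. Then [2]_{q^b} Σ_{i=0}^{n} C(n,i) [a]_q^{n-i} [b]_q^i E_{n-i,q^a}(b x) S*_{n,i,q^b}(a) = [2]_{q^a} Σ_{i=0}^{n} C(n,i) [b]_q^{n-i} [a]_q^i E_{n-i,q^b}(a x) S*_{n,i,q^a}(b). -/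
open Finset Real

lemma qn_abs_le {q : ℝ} (hq0 : 0 < q) (hq1 : q < 1) {z : ℝ} (hz : 0 ≤ z) :
    |qn q z| ≤ 1 / (1 - q) := by
  have h1 : 0 < 1 - q := by linarith
  have h2 : q ^ z ≤ 1 := Real.rpow_le_one hq0.le hq1.le hz
  have h3 : 0 < q ^ z := Real.rpow_pos_of_pos hq0 z
  have h4 : 0 ≤ qn q z := div_nonneg (by linarith) h1.le
  rw [abs_of_nonneg h4]
  unfold qn
  gcongr
  · linarith

lemma qn_add {q : ℝ} (hq0 : 0 < q) (u v : ℝ) :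
    qn q (u + v) = qn q v + q ^ v * qn q u := by
  unfold qn
  rw [Real.rpow_add hq0]
  ring

lemma qn_mul_qn {q : ℝ} (hq0 : 0 < q) (hq1 : q < 1) {a : ℕ} (ha : 0 < a) (z : ℝ) :
    qn q (a : ℝ) * qn (q ^ a) z = qn q ((a : ℝ) * z) := by
  have h1 : (1 : ℝ) - q ≠ 0 := by intro h; nlinarith
  have hqa : q ^ a < 1 := pow_lt_one₀ hq0.le hq1 ha.ne'
  have h2 : (1 : ℝ) - q ^ a ≠ 0 := by intro h; nlinarith
  unfold qn
  have h3 : ((q : ℝ) ^ a) ^ z = q ^ ((a : ℝ) * z) := by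
    rw [← Real.rpow_natCast q a, ← Real.rpow_mul hq0.le]
  have h4 : q ^ ((a : ℝ)) = q ^ a := Real.rpow_natCast q a
  rw [h3, h4]
  field_simp

lemma summable_qE_term {r : ℝ} (h0 : 0 < r) (h1 : r < 1) {y : ℝ} (hy : 0 ≤ y) (k : ℕ) :
    Summable (fun m : ℕ => (-1 : ℝ) ^ m * r ^ m * (qn r ((m : ℝ) + y)) ^ k) := by
  apply Summable.of_norm_bounded (g := fun m => (1 / (1 - r)) ^ k * r ^ m)
    ((summable_geometric_of_lt_one h0.le h1).mul_left _)
  intro m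
  have hmy : (0:ℝ) ≤ (m : ℝ) + y := by positivity
  calc ‖(-1 : ℝ) ^ m * r ^ m * (qn r ((m : ℝ) + y)) ^ k‖
      = r ^ m * |qn r ((m : ℝ) + y)| ^ k := by
        rw [Real.norm_eq_abs, abs_mul, abs_mul, abs_pow, abs_pow, abs_pow, abs_neg, abs_one,
          one_pow, one_mul, abs_of_pos h0]
    _ ≤ r ^ m * (1 / (1 - r)) ^ k := by
        have := pow_le_pow_left₀ (abs_nonneg _) (qn_abs_le h0 h1 hmy) k
        have h5 : (0:ℝ) < 1 - r := by linarith
        exact mul_le_mul le_rfl this (by positivity) (by positivity)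
    _ = (1 / (1 - r)) ^ k * r ^ m := mul_comm _ _

lemma summable_G {q : ℝ} (hq0 : 0 < q) (hq1 : q < 1) {y : ℝ} (hy : 0 ≤ y) (n : ℕ)
    {c : ℕ} (hc : 0 < c) (d : ℕ) :
    Summable (fun m : ℕ => (-1 : ℝ) ^ (c * m + d) * q ^ (c * m + d) *
      (qn q (((c * m + d : ℕ) : ℝ) + y)) ^ n) := by
  apply Summable.of_norm_bounded (g := fun m => (1 / (1 - q)) ^ n * q ^ m)
    ((summable_geometric_of_lt_one hq0.le hq1).mul_left _)
  intro m
  have hmy : (0:ℝ) ≤ ((c * m + d : ℕ) : ℝ) + y := by positivity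
  have hb : q ^ (c * m + d) ≤ q ^ m :=
    pow_le_pow_of_le_one hq0.le hq1.le
      (le_trans (Nat.le_mul_of_pos_left m hc) (Nat.le_add_right _ _))
  calc ‖(-1 : ℝ) ^ (c*m+d) * q ^ (c*m+d) * (qn q (((c*m+d : ℕ) : ℝ) + y)) ^ n‖
      = q ^ (c*m+d) * |qn q (((c*m+d : ℕ) : ℝ) + y)| ^ n := by
        rw [Real.norm_eq_abs, abs_mul, abs_mul, abs_pow, abs_pow, abs_pow, abs_neg, abs_one,
          one_pow, one_mul, abs_of_pos hq0]
    _ ≤ q ^ m * (1 / (1 - q)) ^ n := by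
        have h6 := pow_le_pow_left₀ (abs_nonneg _) (qn_abs_le hq0 hq1 hmy) n
        have h5 : (0:ℝ) < 1 - q := by linarith
        exact mul_le_mul hb h6 (by positivity) (by positivity)
    _ = (1 / (1 - q)) ^ n * q ^ m := mul_comm _ _

lemma reindex {b : ℕ} (hb : 0 < b) (h : ℕ → ℝ) (hh : Summable h) :
    ∑' m : ℕ, h m = ∑' s : ℕ, ∑ t ∈ Finset.range b, h (s * b + t) := by
  haveI : NeZero b := ⟨hb.ne'⟩
  rw [← (Nat.divModEquiv b).symm.tsum_eq h]
  have hs : Summable (fun p : ℕ × Fin b => h ((Nat.divModEquiv b).symm p)) :=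
    (Nat.divModEquiv b).symm.summable_iff.2 hh
  rw [Summable.tsum_prod' hs (fun s => Summable.of_finite)]
  refine tsum_congr fun s => ?_
  rw [tsum_fintype]
  rw [← Fin.sum_univ_eq_sum_range (fun t => h (s * b + t)) b]
  simp [Nat.divModEquiv]

lemma side (q : ℝ) (hq0 : 0 < q) (hq1 : q < 1) (x : ℝ) (hx : 0 ≤ x)
    (n a b : ℕ) (ha : 0 < a) (hb : 0 < b) :
    (1 + q ^ b) * ∑ i ∈ Finset.range (n + 1),
        (n.choose i : ℝ) * (qn q (a : ℝ)) ^ (n - i) * (qn q (b : ℝ)) ^ i *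
          qE (n - i) (q ^ a) ((b : ℝ) * x) * qS n i a (q ^ b)
    = (1 + q ^ a) * ((1 + q ^ b) *
        ∑' m : ℕ, ∑ j ∈ Finset.range a, (-1 : ℝ) ^ (m + j) * q ^ (a * m + b * j) *
          (qn q (((a * m + b * j : ℕ) : ℝ) + (a : ℝ) * (b : ℝ) * x)) ^ n) := by
  have hqa0 : 0 < q ^ a := pow_pos hq0 a
  have hqa1 : q ^ a < 1 := pow_lt_one₀ hq0.le hq1 ha.ne'
  have hbx : (0:ℝ) ≤ (b : ℝ) * x := by positivity
  set c : ℕ → ℝ := fun i =>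
    (n.choose i : ℝ) * (qn q (a : ℝ)) ^ (n - i) * (qn q (b : ℝ)) ^ i * qS n i a (q ^ b)
    with hc
  have stepA : ∀ i ∈ Finset.range (n + 1),
      (n.choose i : ℝ) * (qn q (a : ℝ)) ^ (n - i) * (qn q (b : ℝ)) ^ i *
          qE (n - i) (q ^ a) ((b : ℝ) * x) * qS n i a (q ^ b)
      = (1 + q ^ a) * ∑' m : ℕ,
          c i * ((-1 : ℝ) ^ m * (q ^ a) ^ m * (qn (q ^ a) ((m : ℝ) + (b : ℝ) * x)) ^ (n - i)) := by
    intro i _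
    rw [(summable_qE_term hqa0 hqa1 hbx (n - i)).tsum_mul_left (c i), qE]
    ring
  rw [Finset.sum_congr rfl stepA, ← Finset.mul_sum]
  have hsumm : ∀ i ∈ Finset.range (n + 1),
      Summable (fun m : ℕ =>
        c i * ((-1 : ℝ) ^ m * (q ^ a) ^ m * (qn (q ^ a) ((m : ℝ) + (b : ℝ) * x)) ^ (n - i))) :=
    fun i _ => (summable_qE_term hqa0 hqa1 hbx (n - i)).mul_left (c i)
  rw [← Summable.tsum_finsetSum hsumm]
  have hmain : ∀ m : ℕ,
      (∑ i ∈ Finset.range (n + 1),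
        c i * ((-1 : ℝ) ^ m * (q ^ a) ^ m * (qn (q ^ a) ((m : ℝ) + (b : ℝ) * x)) ^ (n - i)))
      = ∑ j ∈ Finset.range a, (-1 : ℝ) ^ (m + j) * q ^ (a * m + b * j) *
          (qn q (((a * m + b * j : ℕ) : ℝ) + (a : ℝ) * (b : ℝ) * x)) ^ n := by
    intro m
    simp only [hc, qS, Finset.sum_mul, Finset.mul_sum]
    rw [Finset.sum_comm]
    refine Finset.sum_congr rfl fun j _ => ?_
    have e1 : qn q (a : ℝ) * qn (q ^ a) ((m : ℝ) + (b : ℝ) * x)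
        = qn q ((a : ℝ) * m + (a : ℝ) * (b : ℝ) * x) := by
      rw [qn_mul_qn hq0 hq1 ha]
      congr 1
      ring
    have e2 : qn q (b : ℝ) * qn (q ^ b) (j : ℝ) = qn q ((b : ℝ) * j) := qn_mul_qn hq0 hq1 hb _
    have hsum : ∀ i ∈ Finset.range (n + 1),
        (n.choose i : ℝ) * (qn q (a : ℝ)) ^ (n - i) * (qn q (b : ℝ)) ^ i *
            ((-1 : ℝ) ^ j * (q ^ b) ^ ((n + 1 - i) * j) * (qn (q ^ b) (j : ℝ)) ^ i) *
            ((-1 : ℝ) ^ m * (q ^ a) ^ m * (qn (q ^ a) ((m : ℝ) + (b : ℝ) * x)) ^ (n - i))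
        = ((-1 : ℝ) ^ (m + j) * (q ^ a) ^ m * (q ^ b) ^ j) *
            ((qn q ((b : ℝ) * j)) ^ i *
              (qn q ((a : ℝ) * m + (a : ℝ) * (b : ℝ) * x) * (q ^ b) ^ j) ^ (n - i) *
              (n.choose i : ℝ)) := by
      intro i hi
      have h5 : n + 1 - i = (n - i) + 1 := by
        have : i ≤ n := by
          have := Finset.mem_range.mp hi
          omega
        omega
      rw [h5, ← e1, ← e2, add_mul, one_mul, pow_add, pow_mul']
      rw [pow_add]
      ring
    rw [Finset.sum_congr rfl hsum, ← Finset.mul_sum, ← add_pow]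
    have hqn : qn q ((b : ℝ) * j) + qn q ((a : ℝ) * m + (a : ℝ) * (b : ℝ) * x) * (q ^ b) ^ j
        = qn q (((a * m + b * j : ℕ) : ℝ) + (a : ℝ) * (b : ℝ) * x) := by
      have hv : ((b : ℝ) * (j : ℝ)) = ((b * j : ℕ) : ℝ) := by push_cast; ring
      have hrw : q ^ ((b : ℝ) * (j : ℝ)) = (q ^ b) ^ j := by
        rw [hv, Real.rpow_natCast, pow_mul]
      calc qn q ((b : ℝ) * j) + qn q ((a : ℝ) * m + (a : ℝ) * (b : ℝ) * x) * (q ^ b) ^ j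
          = qn q ((b : ℝ) * j) +
              q ^ ((b : ℝ) * (j : ℝ)) * qn q ((a : ℝ) * m + (a : ℝ) * (b : ℝ) * x) := by
            rw [hrw]; ring
        _ = qn q (((a : ℝ) * m + (a : ℝ) * (b : ℝ) * x) + (b : ℝ) * j) :=
            (qn_add hq0 _ _).symm
        _ = qn q (((a * m + b * j : ℕ) : ℝ) + (a : ℝ) * (b : ℝ) * x) := by
            congr 1
            push_cast
            ring
    rw [hqn]
    rw [pow_add q (a * m) (b * j), pow_mul, pow_mul]
    ring

  rw [tsum_congr hmain]
  ring

lemma symm_sum (q : ℝ) (hq0 : 0 < q) (hq1 : q < 1) (y : ℝ) (hy : 0 ≤ y) (n a b : ℕ)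
    (ha : 0 < a) (hb : 0 < b) (hao : Odd a) (hbo : Odd b) :
    ∑' m : ℕ, ∑ j ∈ Finset.range a,
        (-1 : ℝ) ^ (m + j) * q ^ (a * m + b * j) * (qn q (((a * m + b * j : ℕ) : ℝ) + y)) ^ n
    = ∑' m : ℕ, ∑ j ∈ Finset.range b,
        (-1 : ℝ) ^ (m + j) * q ^ (b * m + a * j) * (qn q (((b * m + a * j : ℕ) : ℝ) + y)) ^ n := by
  set G : ℕ → ℝ := fun k => (-1 : ℝ) ^ k * q ^ k * (qn q ((k : ℝ) + y)) ^ n with hG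
  have hterm : ∀ (c d : ℕ), Odd c → Odd d → ∀ m j : ℕ,
      (-1 : ℝ) ^ (m + j) * q ^ (c * m + d * j) * (qn q (((c * m + d * j : ℕ) : ℝ) + y)) ^ n
      = G (c * m + d * j) := by
    intro c d hc hd m j
    rw [hG]
    have hsign : (-1 : ℝ) ^ (m + j) = (-1 : ℝ) ^ (c * m + d * j) := by
      rw [pow_add, pow_add, pow_mul, pow_mul, hc.neg_one_pow, hd.neg_one_pow]
    rw [hsign]
  have hGsummable : ∀ (e f : ℕ), 0 < e → Summable (fun m : ℕ => G (e * m + f)) :=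
    fun e f he => summable_G hq0 hq1 hy n he f
  have main : ∀ (c d : ℕ), 0 < c → 0 < d →
      (∑' m : ℕ, ∑ j ∈ Finset.range c, G (c * m + d * j))
      = ∑' s : ℕ, ∑ t ∈ Finset.range d, ∑ j ∈ Finset.range c,
          G (c * d * s + c * t + d * j) := by
    intro c d hc hd
    have h1 : Summable (fun m : ℕ => ∑ j ∈ Finset.range c, G (c * m + d * j)) :=
      summable_sum fun j _ => hGsummable c (d * j) hc
    rw [reindex hd _ h1]
    refine tsum_congr fun s => ?_
    refine Finset.sum_congr rfl fun t _ => Finset.sum_congr rfl fun j _ => ?_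
    congr 1
    ring
  have e1 : (∑' m : ℕ, ∑ j ∈ Finset.range a,
      (-1 : ℝ) ^ (m + j) * q ^ (a * m + b * j) * (qn q (((a * m + b * j : ℕ) : ℝ) + y)) ^ n)
      = ∑' m : ℕ, ∑ j ∈ Finset.range a, G (a * m + b * j) :=
    tsum_congr fun m => Finset.sum_congr rfl fun j _ => hterm a b hao hbo m j
  have e2 : (∑' m : ℕ, ∑ j ∈ Finset.range b,
      (-1 : ℝ) ^ (m + j) * q ^ (b * m + a * j) * (qn q (((b * m + a * j : ℕ) : ℝ) + y)) ^ n)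
      = ∑' m : ℕ, ∑ j ∈ Finset.range b, G (b * m + a * j) :=
    tsum_congr fun m => Finset.sum_congr rfl fun j _ => hterm b a hbo hao m j
  rw [e1, e2, main a b ha hb, main b a hb ha]
  refine tsum_congr fun s => ?_
  rw [Finset.sum_comm]
  refine Finset.sum_congr rfl fun w _ => Finset.sum_congr rfl fun v _ => ?_
  congr 1
  ring

theorem qEuler_symmetric_identity (q : ℝ) (hq0 : 0 < q) (hq1 : q < 1) (x : ℝ) (hx : 0 ≤ x)
    (n a b : ℕ) (ha : 0 < a) (hb : 0 < b) (hao : Odd a) (hbo : Odd b) :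
    (1 + q ^ b) * ∑ i ∈ Finset.range (n + 1),
        (n.choose i : ℝ) * (qn q (a : ℝ)) ^ (n - i) * (qn q (b : ℝ)) ^ i *
          qE (n - i) (q ^ a) ((b : ℝ) * x) * qS n i a (q ^ b) =
      (1 + q ^ a) * ∑ i ∈ Finset.range (n + 1),
        (n.choose i : ℝ) * (qn q (b : ℝ)) ^ (n - i) * (qn q (a : ℝ)) ^ i *
          qE (n - i) (q ^ b) ((a : ℝ) * x) * qS n i b (q ^ a) := by
  rw [side q hq0 hq1 x hx n a b ha hb, side q hq0 hq1 x hx n b a hb ha]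
  simp only [mul_comm (b : ℝ) (a : ℝ)]
  rw [symm_sum q hq0 hq1 ((a : ℝ) * (b : ℝ) * x) (by positivity) n a b ha hb hao hbo]
  ring
end

section
/- For m, n ≥ 0, real 0 < q < 1, and x, y ≥ 0: Σ_{k=0}^{m} C(m,k) q^{(n+k) x} E_{n+k,q}(y) [x]_q^{m-k} = Σ_{k=0}^{n} C(n,k) q^{(n-k) x} E_{m+k,q}(x+y) [-x]_q^{n-k}. -/
open Finset

private lemma binom_aux (a b : ℝ) (N : ℕ) :
    ∑ k ∈ Finset.range (N + 1), (N.choose k : ℝ) * a ^ k * b ^ (N - k) = (a + b) ^ N := by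
  rw [add_pow]
  exact Finset.sum_congr rfl fun k _ => by ring

theorem qEuler_double_identity (q : ℝ) (hq0 : 0 < q) (hq1 : q < 1) (x y : ℝ) (hx : 0 ≤ x)
    (hy : 0 ≤ y) (m n : ℕ) :
    ∑ k ∈ Finset.range (m + 1), (m.choose k : ℝ) * q ^ (x * ((n + k : ℕ) : ℝ)) *
        qE (n + k) q y * (qn q x) ^ (m - k) =
      ∑ k ∈ Finset.range (n + 1), (n.choose k : ℝ) * q ^ (x * ((n - k : ℕ) : ℝ)) *
        qE (m + k) q (x + y) * (qn q (-x)) ^ (n - k) := by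
  have h1q : (0:ℝ) < 1 - q := by linarith
  have h1q' : (1:ℝ) - q ≠ 0 := ne_of_gt h1q
  -- summability of the basic series
  have hsum : ∀ (N : ℕ) (a : ℝ), 0 ≤ a →
      Summable (fun j : ℕ => (-1:ℝ)^j * q^j * (qn q ((j:ℝ)+a))^N) := by
    intro N a ha
    apply Summable.of_norm_bounded (g := fun j : ℕ => (1/(1-q))^N * q^j)
      ((summable_geometric_of_lt_one hq0.le hq1).mul_left _)
    intro j
    have h0 : 0 ≤ (j:ℝ) + a := by positivity
    have hle : q ^ ((j:ℝ)+a) ≤ 1 := Real.rpow_le_one hq0.le hq1.le h0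
    have hgt : 0 < q ^ ((j:ℝ)+a) := Real.rpow_pos_of_pos hq0 _
    have hb : |qn q ((j:ℝ)+a)| ≤ 1/(1-q) := by
      rw [qn, abs_div, abs_of_pos h1q, abs_of_nonneg (by linarith)]
      gcongr
      linarith
    have : ‖(-1:ℝ)^j * q^j * (qn q ((j:ℝ)+a))^N‖ = q^j * |qn q ((j:ℝ)+a)|^N := by
      simp [abs_mul, abs_pow, abs_of_pos hq0]
    rw [Real.norm_eq_abs] at this ⊢
    rw [this, mul_comm]
    gcongr
  have hxp : ∀ N : ℕ, q ^ (x*(N:ℝ)) = (q^x)^N := fun N => by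
    rw [Real.rpow_mul hq0.le, Real.rpow_natCast]
  -- key identities
  have key1 : ∀ t : ℝ, qn q (t + x) = qn q x + q^x * qn q t := by
    intro t
    unfold qn
    rw [show t + x = x + t from by ring, Real.rpow_add hq0]
    field_simp
    ring
  have key2 : q^x * qn q (-x) = -(qn q x) := by
    unfold qn
    have : q^x * q^(-x) = 1 := by
      rw [← Real.rpow_add hq0]; simp
    field_simp
    rw [mul_sub, this, mul_one]
    ring
  -- the common series
  have hL : (∑ k ∈ Finset.range (m + 1), (m.choose k : ℝ) * q ^ (x * ((n + k : ℕ) : ℝ)) *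
        qE (n + k) q y * (qn q x) ^ (m - k)) =
      ∑' j : ℕ, (1+q) * ((-1:ℝ)^j * q^j) * ((q^x * qn q ((j:ℝ)+y))^n *
        (qn q (((j:ℝ)+y) + x)) ^ m) := by
    have step1 : ∀ k ∈ Finset.range (m+1),
        (m.choose k : ℝ) * q ^ (x * ((n + k : ℕ) : ℝ)) * qE (n + k) q y * (qn q x) ^ (m - k)
          = ∑' j : ℕ, (m.choose k : ℝ) * q ^ (x * ((n + k : ℕ) : ℝ)) *
              ((1+q) * ((-1:ℝ)^j * q^j * (qn q ((j:ℝ)+y))^(n+k))) * (qn q x) ^ (m - k) := by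
      intro k _
      rw [qE]
      symm
      rw [tsum_mul_right, tsum_mul_left, tsum_mul_left]
    rw [Finset.sum_congr rfl step1, ← Summable.tsum_finsetSum (fun k _ => by
      exact ((((hsum (n+k) y hy).mul_left _).mul_left _).mul_right _))]
    refine tsum_congr fun j => ?_
    have step2 : ∀ k ∈ Finset.range (m+1),
        (m.choose k : ℝ) * q ^ (x * ((n + k : ℕ) : ℝ)) *
            ((1+q) * ((-1:ℝ)^j * q^j * (qn q ((j:ℝ)+y))^(n+k))) * (qn q x) ^ (m - k)
          = (1+q) * ((-1:ℝ)^j * q^j) * (q^x * qn q ((j:ℝ)+y))^n *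
              ((m.choose k : ℝ) * (q^x * qn q ((j:ℝ)+y))^k * (qn q x)^(m-k)) := by
      intro k _
      rw [hxp, pow_add]
      ring
    rw [Finset.sum_congr rfl step2, ← Finset.mul_sum, binom_aux, key1 ((j:ℝ)+y)]
    ring
  have hR : (∑ k ∈ Finset.range (n + 1), (n.choose k : ℝ) * q ^ (x * ((n - k : ℕ) : ℝ)) *
        qE (m + k) q (x + y) * (qn q (-x)) ^ (n - k)) =
      ∑' j : ℕ, (1+q) * ((-1:ℝ)^j * q^j) * ((q^x * qn q ((j:ℝ)+y))^n *
        (qn q (((j:ℝ)+y) + x)) ^ m) := by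
    have hxy : 0 ≤ x + y := by linarith
    have harg : ∀ j : ℕ, (j:ℝ) + (x + y) = ((j:ℝ)+y) + x := fun j => by ring
    have step1 : ∀ k ∈ Finset.range (n+1),
        (n.choose k : ℝ) * q ^ (x * ((n - k : ℕ) : ℝ)) * qE (m + k) q (x+y) * (qn q (-x)) ^ (n - k)
          = ∑' j : ℕ, (n.choose k : ℝ) * q ^ (x * ((n - k : ℕ) : ℝ)) *
              ((1+q) * ((-1:ℝ)^j * q^j * (qn q ((j:ℝ)+(x+y)))^(m+k))) * (qn q (-x)) ^ (n - k) := by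
      intro k _
      rw [qE]
      symm
      rw [tsum_mul_right, tsum_mul_left, tsum_mul_left]
    rw [Finset.sum_congr rfl step1, ← Summable.tsum_finsetSum (fun k _ => by
      exact ((((hsum (m+k) (x+y) hxy).mul_left _).mul_left _).mul_right _))]
    refine tsum_congr fun j => ?_
    have step2 : ∀ k ∈ Finset.range (n+1),
        (n.choose k : ℝ) * q ^ (x * ((n - k : ℕ) : ℝ)) *
            ((1+q) * ((-1:ℝ)^j * q^j * (qn q ((j:ℝ)+(x+y)))^(m+k))) * (qn q (-x)) ^ (n - k)
          = (1+q) * ((-1:ℝ)^j * q^j) * (qn q (((j:ℝ)+y)+x))^m *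
              ((n.choose k : ℝ) * (qn q (((j:ℝ)+y)+x))^k * (q^x * qn q (-x))^(n-k)) := by
      intro k _
      rw [hxp, pow_add, harg j, mul_pow]
      ring
    rw [Finset.sum_congr rfl step2, ← Finset.mul_sum, binom_aux, key2, key1 ((j:ℝ)+y)]
    ring_nf
  rw [hL, hR]
end
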